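/- Let W ⊂ ℂⁿ be open, K ⊂ W compact, γ ∈ ℕⁿ a multi-index, and h a holomorphic nowhere-vanishing function on W. Then there exists a constant C > 0 such that for every holomorphic function g on W with sup_{w∈W} |g(w)·w^γ| < ∞ and every z ∈ K, |g(z)·z^γ| ≤ C · sup_{w∈W} |g(w)·w^γ| · |h(z)·z^γ|. -/

import Mathlib

open Filter Topology Metric


/-- One-variable weighted maximum-modulus estimate: if `F` is holomorphic on the closed disc of
radius `s` around `z` and `|F ζ * ζ ^ m| ≤ M` there, then `|F z| ≤ M * (4 / s) ^ m`. -/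
lemma one_var_weighted_bound {F : ℂ → ℂ} {z : ℂ} {s M : ℝ} (hs : 0 < s) (hM : 0 ≤ M) (m : ℕ)
    (hF : DifferentiableOn ℂ F (closedBall z s))
    (hb : ∀ ζ ∈ closedBall z s, ‖(F ζ * ζ ^ m)‖ ≤ M) :
    ‖(F z)‖ ≤ M * (4 / s) ^ m := by
  have key : ∀ ζ : ℂ, ζ ∈ closedBall z s → s / 4 ≤ ‖ζ‖ →
      ‖(F ζ)‖ ≤ M * (4 / s) ^ m := by
    intro ζ hζ hζ4
    have h1 : ‖(F ζ)‖ * ‖(ζ ^ m)‖ ≤ M := by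
      rw [← norm_mul]; exact hb ζ hζ
    have h2 : (s / 4) ^ m ≤ ‖(ζ ^ m)‖ := by
      rw [norm_pow]; exact pow_le_pow_left₀ (by positivity) hζ4 m
    have h3 : ‖(F ζ)‖ * (s / 4) ^ m ≤ M :=
      le_trans (by nlinarith [norm_nonneg (F ζ), pow_pos (by linarith : (0:ℝ) < s/4) m]) h1
    have h4 : (0:ℝ) < (s / 4) ^ m := pow_pos (by linarith) m
    rw [show M * (4 / s) ^ m = M / (s / 4) ^ m by
      rw [eq_div_iff (ne_of_gt h4), div_pow, div_pow]
      field_simp]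
    exact (le_div_iff₀ h4).2 h3
  by_cases hz : ‖z‖ < s / 2
  · -- use the disc of radius `s/2` centered at `0`
    have hsub : closedBall (0:ℂ) (s / 2) ⊆ closedBall z s := by
      intro ζ hζ
      simp only [mem_closedBall, Complex.dist_eq] at hζ ⊢
      calc ‖(ζ - z)‖ ≤ ‖ζ‖ + ‖z‖ := by
            simpa [sub_eq_add_neg] using norm_add_le ζ (-z)
        _ ≤ s := by simp only [norm_zero, sub_zero] at hζ; linarith
    have hcl : closure (ball (0:ℂ) (s / 2)) = closedBall (0:ℂ) (s/2) :=
      closure_ball 0 (by linarith)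
    refine Complex.norm_le_of_forall_mem_frontier_norm_le
      (isBounded_ball) ((hF.mono (hcl ▸ hsub)).diffContOnCl) (fun ζ hζ => ?_) ?_
    · rw [frontier_ball 0 (by linarith : (s/2 : ℝ) ≠ 0)] at hζ
      simp only [mem_sphere_iff_norm, sub_zero] at hζ
      exact key ζ (hsub (by simp [mem_closedBall, Complex.dist_eq, hζ]
        )) (by rw [hζ]; linarith)
    · rw [hcl]; simp [mem_closedBall, Complex.dist_eq]
      simpa [Complex.dist_eq] using le_of_lt hz
  · push_neg at hz
    have hsub : closedBall z (s / 4) ⊆ closedBall z s :=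
      closedBall_subset_closedBall (by linarith)
    have hcl : closure (ball z (s / 4)) = closedBall z (s/4) :=
      closure_ball z (by linarith)
    refine Complex.norm_le_of_forall_mem_frontier_norm_le
      (isBounded_ball) ((hF.mono (hcl ▸ hsub)).diffContOnCl) (fun ζ hζ => ?_) ?_
    · rw [frontier_ball z (by linarith : (s/4 : ℝ) ≠ 0)] at hζ
      simp only [mem_sphere_iff_norm] at hζ
      have hζmem : ζ ∈ closedBall z s := hsub (by
        simp only [mem_closedBall, Complex.dist_eq, hζ]; linarith)
      refine key ζ hζmem ?_
      have : ‖z‖ - ‖ζ‖ ≤ ‖(z - ζ)‖ := norm_sub_norm_le z ζ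
      have hz' : ‖(z - ζ)‖ = s / 4 := by
        rw [← norm_neg, neg_sub]; exact hζ
      linarith
    · rw [hcl]; simp [mem_closedBall]
      positivity

/-- **Monomial-weighted Schwarz-type bound on a compact** (the key estimate in Lemma 2.1): for
`W` open, `K ⊆ W` compact, `γ` a multi-index and `h` a nowhere-vanishing holomorphic function
on `W`, there is `C > 0` such that every holomorphic `g` on `W` with
`sup_W |g(w) w^γ| < ∞` satisfies `|g(z) z^γ| ≤ C ⋅ sup_W |g(w) w^γ| ⋅ |h(z) z^γ|` on `K`. -/
theorem monomial_weighted_bound_on_compact {n : ℕ}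
    (W : Set (Fin n → ℂ)) (hW : IsOpen W)
    (K : Set (Fin n → ℂ)) (hK : IsCompact K) (hKW : K ⊆ W)
    (γ : Fin n → ℕ)
    (h : (Fin n → ℂ) → ℂ) (hh : DifferentiableOn ℂ h W) (hne : ∀ z ∈ W, h z ≠ 0) :
    ∃ C : ℝ, 0 < C ∧ ∀ g : (Fin n → ℂ) → ℂ, DifferentiableOn ℂ g W →
      BddAbove ((fun w => ‖(g w * ∏ i, w i ^ γ i)‖) '' W) →
      ∀ z ∈ K,
        ‖(g z * ∏ i, z i ^ γ i)‖ ≤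
          C * sSup ((fun w => ‖(g w * ∏ i, w i ^ γ i)‖) '' W) *
            ‖(h z * ∏ i, z i ^ γ i)‖ := by
  rcases K.eq_empty_or_nonempty with rfl | hKne
  · exact ⟨1, one_pos, by simp⟩
  -- a safety margin around `K` inside `W`
  obtain ⟨δ₀, hδ₀pos, hδ₀⟩ := hK.exists_cthickening_subset_open hW hKW
  set s : ℝ := δ₀ / (n + 1) with hs_def
  have hs : 0 < s := by positivity
  have hWmem : ∀ w : Fin n → ℂ, infDist w K ≤ (n + 1) * s → w ∈ W := by
    intro w hw
    apply hδ₀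
    rw [Metric.mem_cthickening_iff]
    refine (ENNReal.le_ofReal_iff_toReal_le (Metric.infEdist_ne_top hKne) hδ₀pos.le).2 ?_
    have : ((n:ℝ) + 1) * s = δ₀ := by rw [hs_def]; field_simp
    rw [← this]; exact hw
  -- minimum of |h| on K
  obtain ⟨z₀, hz₀K, hz₀min'⟩ := hK.exists_isMinOn hKne
    ((continuous_norm.comp_continuousOn (hh.continuousOn)).mono hKW)
  set δ : ℝ := ‖(h z₀)‖ with hδ_def
  have hδpos : 0 < δ := by
    have := hne z₀ (hKW hz₀K)
    simpa [hδ_def] using (norm_pos_iff.mpr this)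
  refine ⟨(4 / s) ^ (∑ i, γ i) / δ, by positivity, ?_⟩
  intro g hg hbdd z hzK
  set M : ℝ := sSup ((fun w => ‖(g w * ∏ i, w i ^ γ i)‖) '' W) with hM_def
  have hM0 : 0 ≤ M := le_trans (norm_nonneg _)
    (le_csSup hbdd ⟨z, hKW hzK, rfl⟩)
  -- the key inductive estimate
  have key : ∀ k : ℕ, k ≤ n → ∀ w : Fin n → ℂ,
      infDist w K + (k : ℝ) * s ≤ (n : ℝ) * s →
      ‖(g w)‖ *
          ∏ i ∈ Finset.univ.filter (fun i : Fin n => k ≤ (i : ℕ)), ‖(w i)‖ ^ γ i ≤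
        M * (4 / s) ^ (∑ i ∈ Finset.univ.filter (fun i : Fin n => (i : ℕ) < k), γ i) := by
    intro k
    induction k with
    | zero =>
      intro _ w hw
      have hwW : w ∈ W := by
        apply hWmem
        have h0 : 0 ≤ infDist w K := Metric.infDist_nonneg
        nlinarith
      have : ‖(g w * ∏ i, w i ^ γ i)‖ ≤ M := le_csSup hbdd ⟨w, hwW, rfl⟩
      calc ‖(g w)‖ *
              ∏ i ∈ Finset.univ.filter (fun i : Fin n => 0 ≤ (i : ℕ)), ‖(w i)‖ ^ γ i
          = ‖(g w * ∏ i, w i ^ γ i)‖ := by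
            rw [norm_mul, norm_prod]
            simp [norm_pow]
        _ ≤ M := this
        _ = M * (4 / s) ^ (∑ i ∈ Finset.univ.filter (fun i : Fin n => (i : ℕ) < 0), γ i) := by
            simp
    | succ k ih =>
      intro hk1 w hw
      have hkn : k < n := hk1
      set i₀ : Fin n := ⟨k, hkn⟩ with hi₀
      have hval : (i₀ : ℕ) = k := rfl
      -- filter splitting facts
      have hfilter_prod : Finset.univ.filter (fun i : Fin n => k ≤ (i : ℕ)) =
          insert i₀ (Finset.univ.filter (fun i : Fin n => k + 1 ≤ (i : ℕ))) := by
        ext i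
        simp only [Finset.mem_filter, Finset.mem_univ, true_and, Finset.mem_insert]
        constructor
        · intro hi
          rcases eq_or_lt_of_le hi with hi' | hi'
          · left; exact Fin.ext hi'.symm
          · right; omega
        · rintro (rfl | hi); · omega
          · omega
      have hi₀notmem : i₀ ∉ Finset.univ.filter (fun i : Fin n => k + 1 ≤ (i : ℕ)) := by
        simp [hval]
      have hfilter_sum : Finset.univ.filter (fun i : Fin n => (i : ℕ) < k + 1) =
          insert i₀ (Finset.univ.filter (fun i : Fin n => (i : ℕ) < k)) := by
        ext i
        simp only [Finset.mem_filter, Finset.mem_univ, true_and, Finset.mem_insert]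
        constructor
        · intro hi
          rcases Nat.lt_succ_iff_lt_or_eq.1 hi with hi' | hi'
          · right; exact hi'
          · left; exact Fin.ext hi'
        · rintro (rfl | hi); · omega
          · omega
      have hi₀notmem' : i₀ ∉ Finset.univ.filter (fun i : Fin n => (i : ℕ) < k) := by
        simp [hval]
      -- the slice function
      set F : ℂ → ℂ := fun ζ => g (Function.update w i₀ ζ) *
        ∏ i ∈ Finset.univ.filter (fun i : Fin n => k + 1 ≤ (i : ℕ)), (w i) ^ γ i with hF_def
      -- points of the disc stay close to K
      have hdist : ∀ ζ : ℂ, dist (Function.update w i₀ ζ) w ≤ dist ζ (w i₀) := by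
        intro ζ
        refine (dist_pi_le_iff dist_nonneg).2 fun i => ?_
        rcases eq_or_ne i i₀ with rfl | hi
        · simp
        · simp [Function.update_of_ne hi, dist_nonneg]
      have hnear : ∀ ζ ∈ closedBall (w i₀) s,
          infDist (Function.update w i₀ ζ) K + (k : ℝ) * s ≤ (n : ℝ) * s := by
        intro ζ hζ
        have h1 : infDist (Function.update w i₀ ζ) K ≤ infDist w K + dist (Function.update w i₀ ζ) w :=
          Metric.infDist_le_infDist_add_dist
        have h2 : dist (Function.update w i₀ ζ) w ≤ s := le_trans (hdist ζ) (mem_closedBall.1 hζ)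
        push_cast at hw ⊢
        nlinarith
      -- the disc maps into W
      have hmemW : ∀ ζ ∈ closedBall (w i₀) s, Function.update w i₀ ζ ∈ W := by
        intro ζ hζ
        apply hWmem
        have := hnear ζ hζ
        have h0 : (0:ℝ) ≤ (k:ℝ) * s := by positivity
        nlinarith
      -- differentiability of the slice
      have hL : Differentiable ℂ (fun ζ : ℂ => Function.update w i₀ ζ) := by
        rw [differentiable_pi]
        intro i
        rcases eq_or_ne i i₀ with rfl | hi
        · simpa using differentiable_id
        · simpa [Function.update_of_ne hi] using (differentiable_const (w i))
      have hFdiff : DifferentiableOn ℂ F (closedBall (w i₀) s) := by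
        apply DifferentiableOn.mul _ (differentiableOn_const _)
        exact hg.comp hL.differentiableOn (fun ζ hζ => hmemW ζ hζ)
      -- bound on the disc
      have hFbound : ∀ ζ ∈ closedBall (w i₀) s,
          ‖(F ζ * ζ ^ γ i₀)‖ ≤
            M * (4 / s) ^ (∑ i ∈ Finset.univ.filter (fun i : Fin n => (i : ℕ) < k), γ i) := by
        intro ζ hζ
        have hih := ih (Nat.le_of_succ_le hk1) (Function.update w i₀ ζ) (hnear ζ hζ)
        rw [hfilter_prod, Finset.prod_insert hi₀notmem] at hih
        have hprod : ∏ i ∈ Finset.univ.filter (fun i : Fin n => k + 1 ≤ (i : ℕ)),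
            ‖(Function.update w i₀ ζ i)‖ ^ γ i =
            ∏ i ∈ Finset.univ.filter (fun i : Fin n => k + 1 ≤ (i : ℕ)),
            ‖(w i)‖ ^ γ i := by
          refine Finset.prod_congr rfl fun i hi => ?_
          have : i ≠ i₀ := by
            simp only [Finset.mem_filter] at hi
            intro hcon; rw [hcon] at hi; omega
          rw [Function.update_of_ne this]
        rw [hprod, Function.update_self] at hih
        calc ‖(F ζ * ζ ^ γ i₀)‖
            = ‖(g (Function.update w i₀ ζ))‖ * (‖ζ‖ ^ γ i₀ *
              ∏ i ∈ Finset.univ.filter (fun i : Fin n => k + 1 ≤ (i : ℕ)),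
                ‖(w i)‖ ^ γ i) := by
              rw [hF_def]
              simp only [norm_mul, norm_pow, norm_prod]
              ring
          _ ≤ M * (4 / s) ^ (∑ i ∈ Finset.univ.filter (fun i : Fin n => (i : ℕ) < k), γ i) := hih
      -- apply the one-variable lemma
      have hbound := one_var_weighted_bound hs (by positivity) (γ i₀) hFdiff hFbound
      have hFw : F (w i₀) = g w * ∏ i ∈ Finset.univ.filter (fun i : Fin n => k + 1 ≤ (i : ℕ)),
          (w i) ^ γ i := by
        rw [hF_def]; simp [Function.update_eq_self]
      rw [hFw, norm_mul, norm_prod] at hbound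
      simp only [norm_pow] at hbound
      calc ‖(g w)‖ *
            ∏ i ∈ Finset.univ.filter (fun i : Fin n => k + 1 ≤ (i : ℕ)), ‖(w i)‖ ^ γ i
          ≤ M * (4 / s) ^ (∑ i ∈ Finset.univ.filter (fun i : Fin n => (i : ℕ) < k), γ i) *
            (4 / s) ^ γ i₀ := hbound
        _ = M * (4 / s) ^ (∑ i ∈ Finset.univ.filter (fun i : Fin n => (i : ℕ) < k + 1), γ i) := by
            rw [hfilter_sum, Finset.sum_insert hi₀notmem', pow_add]; ring
  -- apply at `k = n`, `w = z`
  have hz0 : infDist z K + (n : ℝ) * s ≤ (n : ℝ) * s := by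
    rw [Metric.infDist_zero_of_mem hzK]; linarith
  have hfin := key n le_rfl z hz0
  have hempty : Finset.univ.filter (fun i : Fin n => n ≤ (i : ℕ)) = (∅ : Finset (Fin n)) := by
    ext i; simp
  have hall : Finset.univ.filter (fun i : Fin n => (i : ℕ) < n) = Finset.univ := by
    ext i; simp [i.isLt]
  rw [hempty, hall] at hfin
  simp only [Finset.prod_empty, mul_one] at hfin
  -- final assembly
  have hP0 : (0:ℝ) ≤ ∏ i, ‖(z i)‖ ^ γ i :=
    Finset.prod_nonneg fun i _ => by positivity
  have hδle : δ ≤ ‖(h z)‖ := hz₀min' hzK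
  set P : ℝ := ∏ i, ‖(z i)‖ ^ γ i with hP_def
  set A : ℝ := (4 / s) ^ (∑ i, γ i) with hA_def
  have hA0 : 0 ≤ A := by positivity
  have habs1 : ‖(g z * ∏ i, z i ^ γ i)‖ = ‖(g z)‖ * P := by
    rw [hP_def, norm_mul, norm_prod]; simp [norm_pow]
  have habs2 : ‖(h z * ∏ i, z i ^ γ i)‖ = ‖(h z)‖ * P := by
    rw [hP_def, norm_mul, norm_prod]; simp [norm_pow]
  clear_value s δ M P A
  rw [habs1, habs2]
  have hδne : δ ≠ 0 := ne_of_gt hδpos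
  calc ‖(g z)‖ * P
      ≤ (M * A) * P := mul_le_mul_of_nonneg_right hfin hP0
    _ = A / δ * M * (δ * P) := by field_simp
    _ ≤ A / δ * M * (‖(h z)‖ * P) := by
        have hcoef : 0 ≤ A / δ * M := by positivity
        exact mul_le_mul_of_nonneg_left
          (mul_le_mul_of_nonneg_right hδle hP0) hcoef
    _ = A / δ * M * (‖(h z)‖ * P) := rfl
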